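/- (Jacobi–Anger expansion, sine part.) For all τ, θ ∈ ℝ, the series 2·Σ_{m=0}^{∞} J_{2m+1}(τ)·sin((2m+1)θ) converges absolutely and equals sin(τ·sin θ). -/
import Mathlib


open Real

/-- The Bessel function of the first kind of (natural) order `k`. -/
noncomputable def besselJ (k : ℕ) (τ : ℝ) : ℝ :=
  ∑' m : ℕ, (-1 : ℝ) ^ m * (τ / 2) ^ (2 * m + k) /
    ((m.factorial : ℝ) * ((m + k).factorial : ℝ))

namespace JacobiAngerAux

noncomputable def cc (τ θ : ℝ) (a : ℕ) : ℂ :=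
  ((τ / 2 : ℂ) * Complex.exp (θ * Complex.I)) ^ a / (a.factorial : ℂ)

noncomputable def dd (τ θ : ℝ) (b : ℕ) : ℂ :=
  (-(τ / 2 : ℂ) * Complex.exp (-θ * Complex.I)) ^ b / (b.factorial : ℂ)

noncomputable def g (τ θ : ℝ) (p : ℕ × ℕ) : ℝ :=
  (-1 : ℝ) ^ p.2 * (τ / 2) ^ (p.1 + p.2) / (p.1.factorial * p.2.factorial) *
    Real.sin (((p.1 : ℝ) - p.2) * θ)

lemma summable_norm_exp (z : ℂ) :
    Summable (fun a : ℕ => ‖z ^ a / (a.factorial : ℂ)‖) := by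
  simpa [norm_div, norm_pow, Complex.norm_natCast] using
    Real.summable_pow_div_factorial ‖z‖

lemma exp_tsum (z : ℂ) : Complex.exp z = ∑' n : ℕ, z ^ n / (n.factorial : ℂ) := by
  rw [Complex.exp_eq_exp_ℂ, NormedSpace.exp_eq_tsum_div]

lemma im_ofReal_mul_exp (r s : ℝ) :
    (Complex.ofReal r * Complex.exp (Complex.ofReal s * Complex.I)).im = r * Real.sin s := by
  simp [Complex.mul_im, Complex.exp_ofReal_mul_I_im, Complex.exp_ofReal_mul_I_re]

lemma key (τ θ : ℝ) (a b : ℕ) :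
    cc τ θ a * dd τ θ b =
      Complex.ofReal ((-1 : ℝ) ^ b * (τ / 2) ^ (a + b) / (a.factorial * b.factorial)) *
        Complex.exp (Complex.ofReal (((a : ℝ) - b) * θ) * Complex.I) := by
  rw [show cc τ θ a * dd τ θ b =
      ((τ / 2 : ℂ) ^ a * (-(τ / 2 : ℂ)) ^ b / ((a.factorial : ℂ) * (b.factorial : ℂ))) *
        (Complex.exp (θ * Complex.I) ^ a * Complex.exp (-θ * Complex.I) ^ b) from by
    simp only [cc, dd, mul_pow]; ring]
  rw [← Complex.exp_nat_mul, ← Complex.exp_nat_mul, ← Complex.exp_add]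
  congr 1
  · rw [neg_pow]
    push_cast
    rw [pow_add]
    ring
  · push_cast
    ring_nf

lemma summable_norm_cd (τ θ : ℝ) :
    Summable (fun p : ℕ × ℕ => ‖cc τ θ p.1 * dd τ θ p.2‖) :=
  Summable.mul_norm (summable_norm_exp _) (summable_norm_exp _)

lemma tsum_cd (τ θ : ℝ) :
    ∑' p : ℕ × ℕ, cc τ θ p.1 * dd τ θ p.2 =
      Complex.exp ((τ * Real.sin θ : ℝ) * Complex.I) := by
  simp only [cc, dd]
  rw [← tsum_mul_tsum_of_summable_norm (summable_norm_exp _) (summable_norm_exp _)]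
  rw [← exp_tsum, ← exp_tsum]
  rw [← Complex.exp_add]
  congr 1
  rw [Complex.exp_mul_I]
  rw [show Complex.exp (-(θ:ℂ) * Complex.I) = Complex.cos θ - Complex.sin θ * Complex.I from by
    rw [show (-(θ:ℂ) * Complex.I) = ((-θ : ℂ)) * Complex.I from by ring, Complex.exp_mul_I,
      Complex.cos_neg, Complex.sin_neg]
    ring]
  push_cast [Complex.ofReal_sin]
  ring

lemma hasSum_g (τ θ : ℝ) : HasSum (g τ θ) (Real.sin (τ * Real.sin θ)) := by
  have hS : Summable (fun p : ℕ × ℕ => cc τ θ p.1 * dd τ θ p.2) :=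
    (summable_norm_cd τ θ).of_norm
  have h1 := hS.hasSum
  rw [tsum_cd τ θ] at h1
  have h2 := ((Complex.hasSum_iff _ _).1 h1).2
  have him : (Complex.exp ((τ * Real.sin θ : ℝ) * Complex.I)).im = Real.sin (τ * Real.sin θ) :=
    Complex.exp_ofReal_mul_I_im _
  rw [him] at h2
  convert h2 using 2 with p
  rw [key, im_ofReal_mul_exp]
  rfl

def pairEquiv : ℤ × ℕ ≃ ℕ × ℕ where
  toFun q := (q.2 + q.1.toNat, q.2 + (-q.1).toNat)
  invFun p := ((p.1 : ℤ) - p.2, min p.1 p.2)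
  left_inv q := by
    obtain ⟨n, j⟩ := q
    simp only [Prod.mk.injEq]
    constructor <;> omega
  right_inv p := by
    obtain ⟨a, b⟩ := p
    simp only [Prod.mk.injEq]
    constructor <;> omega

lemma pairEquiv_nat (k j : ℕ) : pairEquiv ((k : ℤ), j) = (j + k, j) := by
  simp [pairEquiv]

lemma pairEquiv_neg (k j : ℕ) : pairEquiv (-(k : ℤ), j) = (j, j + k) := by
  simp [pairEquiv]

lemma fiber_nat (τ θ : ℝ) (k : ℕ) :
    (∑' j : ℕ, g τ θ (pairEquiv ((k : ℤ), j))) = besselJ k τ * Real.sin (k * θ) := by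
  have h : ∀ j : ℕ, g τ θ (pairEquiv ((k : ℤ), j)) =
      ((-1 : ℝ) ^ j * (τ / 2) ^ (2 * j + k) / ((j.factorial : ℝ) * ((j + k).factorial : ℝ))) *
        Real.sin (k * θ) := by
    intro j
    rw [pairEquiv_nat]
    simp only [g]
    have e1 : ((j + k : ℕ) : ℝ) - (j : ℝ) = (k : ℝ) := by push_cast; ring
    rw [e1]
    have e2 : (j + k) + j = 2 * j + k := by ring
    rw [e2]
    ring
  rw [tsum_congr h, tsum_mul_right, besselJ]

lemma fiber_neg (τ θ : ℝ) (k : ℕ) :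
    (∑' j : ℕ, g τ θ (pairEquiv (-(k : ℤ), j))) =
      besselJ k τ * ((-1 : ℝ) ^ (k + 1) * Real.sin (k * θ)) := by
  have h : ∀ j : ℕ, g τ θ (pairEquiv (-(k : ℤ), j)) =
      ((-1 : ℝ) ^ j * (τ / 2) ^ (2 * j + k) / ((j.factorial : ℝ) * ((j + k).factorial : ℝ))) *
        ((-1 : ℝ) ^ (k + 1) * Real.sin (k * θ)) := by
    intro j
    rw [pairEquiv_neg]
    simp only [g]
    have e1 : (j : ℝ) - ((j + k : ℕ) : ℝ) = -(k : ℝ) := by push_cast; ring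
    rw [e1]
    have e2 : j + (j + k) = 2 * j + k := by ring
    rw [e2, pow_add, pow_add]
    rw [show (-(k : ℝ)) * θ = -(k * θ) by ring, Real.sin_neg]
    ring
  rw [tsum_congr h, tsum_mul_right, besselJ]

end JacobiAngerAux

open JacobiAngerAux

theorem jacobi_anger_sin (τ θ : ℝ) :
    Summable (fun m : ℕ => |2 * besselJ (2 * m + 1) τ * Real.sin ((2 * m + 1 : ℕ) * θ)|) ∧
    ∑' m : ℕ, 2 * besselJ (2 * m + 1) τ * Real.sin ((2 * m + 1 : ℕ) * θ) =
      Real.sin (τ * Real.sin θ) := by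
  -- fiber sums over ℤ
  set H : ℤ → ℝ := fun n => ∑' j : ℕ, g τ θ (pairEquiv (n, j)) with hHdef
  have hGsum : Summable (g τ θ) := (hasSum_g τ θ).summable
  have hGe : Summable (fun q : ℤ × ℕ => g τ θ (pairEquiv q)) :=
    pairEquiv.summable_iff.mpr hGsum
  have hH : Summable H := hGe.prod
  -- total sum over ℤ equals sin (τ sin θ)
  have htotal : ∑' n : ℤ, H n = Real.sin (τ * Real.sin θ) := by
    rw [hHdef]
    rw [← Summable.tsum_prod hGe, pairEquiv.tsum_eq (g τ θ), (hasSum_g τ θ).tsum_eq]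
  -- values of H
  have hHnat : ∀ k : ℕ, H (k : ℤ) = besselJ k τ * Real.sin (k * θ) := fun k => fiber_nat τ θ k
  have hHneg : ∀ k : ℕ, H (-(k : ℤ)) = besselJ k τ * ((-1 : ℝ) ^ (k + 1) * Real.sin (k * θ)) :=
    fun k => fiber_neg τ θ k
  -- split the ℤ-sum
  have h₁ : Summable (fun n : ℕ => H (n : ℤ)) :=
    hH.comp_injective (fun a b hab => by exact_mod_cast hab)
  have h₂ : Summable (fun n : ℕ => H (-((n : ℤ) + 1))) :=
    hH.comp_injective (fun a b hab => by omega)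
  have hsplit : ∑' n : ℤ, H n = (∑' n : ℕ, H (n : ℤ)) + ∑' n : ℕ, H (-((n : ℤ) + 1)) :=
    tsum_of_nat_of_neg_add_one h₁ h₂
  -- peel off H 0 = 0
  have hH0 : H (0 : ℤ) = 0 := by
    have := hHnat 0
    simpa using this
  have hshift : ∑' n : ℕ, H (n : ℤ) = ∑' n : ℕ, H ((n : ℤ) + 1) := by
    rw [Summable.tsum_eq_zero_add h₁]
    simp only [Nat.cast_zero, hH0, zero_add]
    exact tsum_congr fun n => by push_cast; ring_nf
  have h₁' : Summable (fun n : ℕ => H ((n : ℤ) + 1)) := by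
    have := (summable_nat_add_iff 1).mpr h₁
    refine this.congr fun n => ?_
    push_cast
    ring_nf
  -- the combined sequence
  set K : ℕ → ℝ := fun n => H ((n : ℤ) + 1) + H (-((n : ℤ) + 1)) with hKdef
  have hK : Summable K := h₁'.add h₂
  have hKsum : ∑' n : ℤ, H n = ∑' n : ℕ, K n := by
    rw [hsplit, hshift, hKdef, Summable.tsum_add h₁' h₂]
  -- values of K
  have hKval : ∀ n : ℕ, K n = (1 + (-1 : ℝ) ^ n) * (besselJ (n + 1) τ * Real.sin ((n + 1) * θ)) := by
    intro n
    have e1 : ((n : ℤ) + 1) = ((n + 1 : ℕ) : ℤ) := by push_cast; ring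
    rw [hKdef]
    simp only [e1, hHnat (n + 1), hHneg (n + 1)]
    rw [pow_succ, pow_succ]
    push_cast
    ring
  -- even part and odd part
  have hKeven : ∀ m : ℕ, K (2 * m) =
      2 * besselJ (2 * m + 1) τ * Real.sin ((2 * m + 1 : ℕ) * θ) := by
    intro m
    rw [hKval]
    have : (-1 : ℝ) ^ (2 * m) = 1 := by
      rw [pow_mul]; norm_num
    rw [this]
    push_cast
    ring
  have hKodd : ∀ m : ℕ, K (2 * m + 1) = 0 := by
    intro m
    rw [hKval]
    have : (-1 : ℝ) ^ (2 * m + 1) = -1 := by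
      rw [pow_add, pow_mul]; norm_num
    rw [this]
    ring
  have hKe : Summable (fun m : ℕ => K (2 * m)) :=
    hK.comp_injective fun a b hab => by omega
  have hKo : Summable (fun m : ℕ => K (2 * m + 1)) :=
    hK.comp_injective fun a b hab => by omega
  have heo : (∑' m : ℕ, K (2 * m)) + (∑' m : ℕ, K (2 * m + 1)) = ∑' n : ℕ, K n :=
    tsum_even_add_odd hKe hKo
  have hodd0 : (∑' m : ℕ, K (2 * m + 1)) = 0 := by
    rw [tsum_congr hKodd]; exact tsum_zero
  constructor
  · have := hKe.abs
    exact this.congr fun m => by rw [hKeven m]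
  · calc ∑' m : ℕ, 2 * besselJ (2 * m + 1) τ * Real.sin ((2 * m + 1 : ℕ) * θ)
        = ∑' m : ℕ, K (2 * m) := tsum_congr fun m => (hKeven m).symm
      _ = (∑' m : ℕ, K (2 * m)) + (∑' m : ℕ, K (2 * m + 1)) := by rw [hodd0, add_zero]
      _ = ∑' n : ℕ, K n := heo
      _ = ∑' n : ℤ, H n := hKsum.symm
      _ = Real.sin (τ * Real.sin θ) := htotal
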